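/- For any 0 < t ≤ 1 and real γ, γ₀ ∈ [-1/6, 1/6] both nonzero, the corresponding roots satisfy |cos t_h⁻(γ) - cos t_h⁻(γ₀)| ≤ C |γ - γ₀| t⁴ for an absolute constant C, where cos t_h⁻(γ) = (4γ + 1 + t²/6 - √((1+t²/6)² + 4γt²))/(4γ). -/

import Mathlib

private lemma aux_root (t g : ℝ) (ht : 0 < t) (ht1 : t ≤ 1) (h1 : -1/6 ≤ g)
    (hg : g ≠ 0) :
    5/6 ≤ Real.sqrt ((1 + t^2/6)^2 + 4*g*t^2) ∧
    (4*g + 1 + t^2/6 - Real.sqrt ((1 + t^2/6)^2 + 4*g*t^2)) / (4*g)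
      = 1 - t^2 / ((1 + t^2/6) + Real.sqrt ((1 + t^2/6)^2 + 4*g*t^2)) := by
  have ht2 : t^2 ≤ 1 := by nlinarith
  have hnn : (0:ℝ) ≤ (1 + t^2/6)^2 + 4*g*t^2 := by nlinarith
  set s := Real.sqrt ((1 + t^2/6)^2 + 4*g*t^2) with hs
  have hs2 : s^2 = (1 + t^2/6)^2 + 4*g*t^2 := Real.sq_sqrt hnn
  have hsnn : 0 ≤ s := Real.sqrt_nonneg _
  have hlow : 5/6 ≤ s := by nlinarith [hs2, hsnn]
  refine ⟨hlow, ?_⟩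
  have hden : (1 + t^2/6) + s ≠ 0 := by positivity
  have h4g : (4:ℝ)*g ≠ 0 := by simpa using hg
  field_simp
  ring_nf
  nlinarith [hs2]

set_option maxHeartbeats 1000000 in
theorem dispersion_root_lipschitz_in_parameter :
    ∃ C : ℝ, 0 < C ∧ ∀ t γ γ₀ : ℝ, 0 < t → t ≤ 1 →
      -1/6 ≤ γ → γ ≤ 1/6 → γ ≠ 0 →
      -1/6 ≤ γ₀ → γ₀ ≤ 1/6 → γ₀ ≠ 0 →
      |(4*γ + 1 + t^2/6 - Real.sqrt ((1 + t^2/6)^2 + 4*γ*t^2)) / (4*γ)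
        - (4*γ₀ + 1 + t^2/6 - Real.sqrt ((1 + t^2/6)^2 + 4*γ₀*t^2)) / (4*γ₀)|
        ≤ C * |γ - γ₀| * t^4 := by
  refine ⟨2, by norm_num, ?_⟩
  intro t γ γ₀ ht ht1 hγ1 hγ2 hγ0 hδ1 hδ2 hδ0
  obtain ⟨hlow, hid⟩ := aux_root t γ ht ht1 hγ1 hγ0
  obtain ⟨hlow₀, hid₀⟩ := aux_root t γ₀ ht ht1 hδ1 hδ0
  set a := 1 + t^2/6 with ha
  set s := Real.sqrt (a^2 + 4*γ*t^2) with hs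
  set s₀ := Real.sqrt (a^2 + 4*γ₀*t^2) with hs₀
  have ht2 : t^2 ≤ 1 := by nlinarith
  have hnn : (0:ℝ) ≤ a^2 + 4*γ*t^2 := by rw [ha]; nlinarith
  have hnn₀ : (0:ℝ) ≤ a^2 + 4*γ₀*t^2 := by rw [ha]; nlinarith
  have hs2 : s^2 = a^2 + 4*γ*t^2 := Real.sq_sqrt hnn
  have hs₀2 : s₀^2 = a^2 + 4*γ₀*t^2 := Real.sq_sqrt hnn₀
  have ha1 : (1:ℝ) ≤ a := by rw [ha]; nlinarith
  clear_value a s s₀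
  have hsum : (5:ℝ)/3 ≤ s + s₀ := by linarith
  have hden1 : (11:ℝ)/6 ≤ a + s := by linarith
  have hden2 : (11:ℝ)/6 ≤ a + s₀ := by linarith
  have hss : (s - s₀) * (s + s₀) = 4*(γ-γ₀)*t^2 := by
    linear_combination hs2 - hs₀2
  rw [hid, hid₀]
  have hP : (121:ℝ)/36 ≤ (a + s) * (a + s₀) := by nlinarith [hden1, hden2]
  have hD : (605:ℝ)/108 ≤ (s + s₀) * ((a + s) * (a + s₀)) := by
    nlinarith [hsum, hP]
  have hDpos : (0:ℝ) < (s + s₀) * ((a + s) * (a + s₀)) := by linarith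
  have hne1 : a + s ≠ 0 := by positivity
  have hne2 : a + s₀ ≠ 0 := by positivity
  have hne3 : s + s₀ ≠ 0 := by positivity
  have hdiff : (1 - t^2/(a+s)) - (1 - t^2/(a+s₀))
      = 4*(γ-γ₀)*t^4 / ((s + s₀) * ((a + s) * (a + s₀))) := by
    rw [eq_div_iff (by positivity)]
    field_simp
    linear_combination t^2 * hss
  rw [hdiff, abs_div, abs_of_pos hDpos]
  rw [div_le_iff₀ hDpos]
  have habs : |4*(γ-γ₀)*t^4| = 4 * |γ - γ₀| * t^4 := by
    rw [abs_mul, abs_mul]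
    rw [abs_of_pos (by positivity : (0:ℝ) < t^4)]
    norm_num
  rw [habs]
  have hγabs : 0 ≤ |γ - γ₀| := abs_nonneg _
  have ht4 : 0 < t^4 := by positivity
  nlinarith [mul_nonneg hγabs ht4.le]
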